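/- Let I be a monomial ideal with a regular linear quotient and u ∈ G(I). The closure operator c on 𝔮(u), where c(σ) is the largest τ ⊆ 𝔮(u) with 𝔤(σ;u) = 𝔤(τ;u), satisfies the anti-exchange axiom: if a ≠ b, a, b ∉ c(σ), and a ∈ c(σ ∪ {b}), then b ∉ c(σ ∪ {a}). Hence (𝔮(u), c) is a convex geometry. -/

import Mathlib

namespace CGaux

variable {n m : ℕ} {u : Fin m → Fin n → ℕ} {q : Fin m → Finset (Fin n)}
  {g : (Fin n → ℕ) → Fin m}

/-- antitone of g -/
lemma g_le
    (hg : ∀ v : Fin n → ℕ, (∃ i, ∀ t, u i t ≤ v t) →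
      ((∀ t, u (g v) t ≤ v t) ∧ ∀ i, (∀ t, u i t ≤ v t) → g v ≤ i))
    {v w : Fin n → ℕ} (hex : ∃ i, ∀ t, u i t ≤ v t) (hvw : ∀ t, v t ≤ w t) :
    g w ≤ g v := by
  obtain ⟨hd, _⟩ := hg v hex
  exact (hg w ⟨g v, fun t => (hd t).trans (hvw t)⟩).2 _ (fun t => (hd t).trans (hvw t))

/-- absolute vanishing: if k is the minimal divisor index of v, then
no quotient variable of k has slack in v. -/
lemma vanish
    (hq : ∀ j : Fin m, ∀ w : Fin n → ℕ,
      ((∃ i, i < j ∧ ∀ t, u i t ≤ w t + u j t) ↔ ∃ x ∈ q j, 1 ≤ w x))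
    {k : Fin m} {v : Fin n → ℕ}
    (hkv : ∀ t, u k t ≤ v t) (hmin : ∀ i, (∀ t, u i t ≤ v t) → k ≤ i)
    {x : Fin n} (hx : x ∈ q k) : ¬ (u k x + 1 ≤ v x) := by
  intro hxx
  obtain ⟨i, hik, hi⟩ := (hq k (fun t => if t = x then 1 else 0)).2 ⟨x, hx, by simp⟩
  have hiv : ∀ t, u i t ≤ v t := by
    intro t
    have h := hi t
    by_cases ht : t = x
    · subst ht; simp at h; omega
    · simp [ht] at h; exact h.trans (hkv t)
  exact absurd hik (not_lt.mpr (hmin i hiv))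

/-- The key "transfer" lemma: if `k = g v` and `z ∈ q k`, then
`g (v·x_z) = g (u_k·x_z)`. Uses regularity. -/
lemma star
    (hq : ∀ j : Fin m, ∀ w : Fin n → ℕ,
      ((∃ i, i < j ∧ ∀ t, u i t ≤ w t + u j t) ↔ ∃ x ∈ q j, 1 ≤ w x))
    (hg : ∀ v : Fin n → ℕ, (∃ i, ∀ t, u i t ≤ v t) →
      ((∀ t, u (g v) t ≤ v t) ∧ ∀ i, (∀ t, u i t ≤ v t) → g v ≤ i))
    (hreg : ∀ j : Fin m, ∀ y ∈ q j,
      q (g (fun t => u j t + if t = y then 1 else 0)) ⊆ q j)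
    {k : Fin m} {v : Fin n → ℕ} {z : Fin n}
    (hkv : ∀ t, u k t ≤ v t) (hmin : ∀ i, (∀ t, u i t ≤ v t) → k ≤ i)
    (hz : z ∈ q k) :
    g (fun t => v t + if t = z then 1 else 0)
      = g (fun t => u k t + if t = z then 1 else 0) := by
  obtain ⟨hk'd, hk'min⟩ := hg (fun t => u k t + if t = z then 1 else 0)
    ⟨k, fun t => Nat.le_add_right _ _⟩
  obtain ⟨hKd, hKmin⟩ := hg (fun t => v t + if t = z then 1 else 0)
    ⟨k, fun t => by exact (hkv t).trans (Nat.le_add_right _ _)⟩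
  refine le_antisymm
    (hKmin _ (fun t => (hk'd t).trans (Nat.add_le_add_right (hkv t) _))) ?_
  by_contra hcon
  push_neg at hcon
  -- hcon : g (v + e_z) < g (u k + e_z)
  obtain ⟨x, hxq, hx1⟩ := (hq (g (fun t => u k t + if t = z then 1 else 0))
    (fun t => ((u k t + if t = z then 1 else 0) - u (g (fun t => u k t + if t = z then 1 else 0)) t)
      + (v t - u k t))).1
    ⟨g (fun t => v t + if t = z then 1 else 0), hcon, by
      intro t
      have h1 := hKd t
      have h2 := hk'd t
      have h3 := hkv t
      omega⟩
  have hd'x : (u k x + if x = z then 1 else 0)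
      - u (g (fun t => u k t + if t = z then 1 else 0)) x = 0 := by
    by_contra h
    have h2 := hk'd x
    exact vanish hq hk'd hk'min hxq (by omega)
  have hdx : 1 ≤ v x - u k x := by omega
  have hxk : x ∈ q k := hreg k z hz hxq
  exact vanish hq hkv hmin hxk (by omega)

/-- adding a quotient variable of `g(σ;u)` strictly decreases `g`. -/
lemma charA
    (hq : ∀ j : Fin m, ∀ w : Fin n → ℕ,
      ((∃ i, i < j ∧ ∀ t, u i t ≤ w t + u j t) ↔ ∃ x ∈ q j, 1 ≤ w x))
    (hg : ∀ v : Fin n → ℕ, (∃ i, ∀ t, u i t ≤ v t) →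
      ((∀ t, u (g v) t ≤ v t) ∧ ∀ i, (∀ t, u i t ≤ v t) → g v ≤ i))
    {j : Fin m} {σ : Finset (Fin n)} {y : Fin n} (hyσ : y ∉ σ)
    (hy : y ∈ q (g (fun t => u j t + if t ∈ σ then 1 else 0))) :
    g (fun t => u j t + if t ∈ insert y σ then 1 else 0)
      < g (fun t => u j t + if t ∈ σ then 1 else 0) := by
  obtain ⟨hd, hmin⟩ := hg (fun t => u j t + if t ∈ σ then 1 else 0)
    ⟨j, fun t => Nat.le_add_right _ _⟩
  obtain ⟨i, hii0, hi⟩ := (hq (g (fun t => u j t + if t ∈ σ then 1 else 0))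
    (fun t => if t = y then 1 else 0)).2 ⟨y, hy, by simp⟩
  refine lt_of_le_of_lt ?_ hii0
  refine (hg (fun t => u j t + if t ∈ insert y σ then 1 else 0)
    ⟨j, fun t => Nat.le_add_right _ _⟩).2 i ?_
  intro t
  have h1 := hi t
  have h2 := hd t
  by_cases hty : t = y
  · subst hty
    simp only [if_pos rfl, Finset.mem_insert, true_or, if_pos] at h1 ⊢
    simp only [if_neg hyσ] at h2
    omega
  · have hit : (if t ∈ insert y σ then (1:ℕ) else 0) = (if t ∈ σ then 1 else 0) := by
      simp [Finset.mem_insert, hty]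
    simp only [if_neg hty] at h1
    omega

/-- adding a non-quotient variable of `g(σ;u)` does not change `g`. -/
lemma charB
    (hq : ∀ j : Fin m, ∀ w : Fin n → ℕ,
      ((∃ i, i < j ∧ ∀ t, u i t ≤ w t + u j t) ↔ ∃ x ∈ q j, 1 ≤ w x))
    (hg : ∀ v : Fin n → ℕ, (∃ i, ∀ t, u i t ≤ v t) →
      ((∀ t, u (g v) t ≤ v t) ∧ ∀ i, (∀ t, u i t ≤ v t) → g v ≤ i))
    {j : Fin m} {σ : Finset (Fin n)} {y : Fin n} (hyσ : y ∉ σ)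
    (hyq : y ∉ q (g (fun t => u j t + if t ∈ σ then 1 else 0))) :
    g (fun t => u j t + if t ∈ insert y σ then 1 else 0)
      = g (fun t => u j t + if t ∈ σ then 1 else 0) := by
  obtain ⟨hd, hmin⟩ := hg (fun t => u j t + if t ∈ σ then 1 else 0)
    ⟨j, fun t => Nat.le_add_right _ _⟩
  obtain ⟨hd', hmin'⟩ := hg (fun t => u j t + if t ∈ insert y σ then 1 else 0)
    ⟨j, fun t => Nat.le_add_right _ _⟩
  have hle : g (fun t => u j t + if t ∈ insert y σ then 1 else 0)
      ≤ g (fun t => u j t + if t ∈ σ then 1 else 0) := by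
    refine hmin' _ ?_
    intro t
    have h2 := hd t
    by_cases ht : t ∈ σ
    · simp only [if_pos ht, if_pos (Finset.mem_insert_of_mem ht)] at h2 ⊢; omega
    · simp only [if_neg ht] at h2
      split <;> omega
  rcases eq_or_lt_of_le hle with heq | hlt
  · exact heq
  exfalso
  obtain ⟨x, hxq, hx1⟩ := (hq (g (fun t => u j t + if t ∈ σ then 1 else 0))
    (fun t => (u j t + if t ∈ insert y σ then 1 else 0)
      - u (g (fun t => u j t + if t ∈ σ then 1 else 0)) t)).1
    ⟨_, hlt, by
      intro t
      have h1 := hd' t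
      have h2 := hd t
      by_cases ht : t ∈ σ
      · simp only [if_pos ht, if_pos (Finset.mem_insert_of_mem ht)] at h1 h2 ⊢; omega
      · simp only [if_neg ht] at h2 ⊢
        by_cases hty : t = y
        · subst hty
          simp only [Finset.mem_insert, true_or, if_pos] at h1 ⊢; omega
        · have hit : (if t ∈ insert y σ then (1:ℕ) else 0) = (if t ∈ σ then 1 else 0) := by
            simp [Finset.mem_insert, hty]
          simp only [if_neg ht] at hit
          omega⟩
  by_cases hxy : x = y
  · exact hyq (hxy ▸ hxq)
  · refine vanish hq hd hmin hxq ?_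
    have hms : (if x ∈ insert y σ then (1:ℕ) else 0) = (if x ∈ σ then 1 else 0) := by
      simp [Finset.mem_insert, hxy]
    have h2 := hd x
    omega

lemma lemF
    (hq : ∀ j : Fin m, ∀ w : Fin n → ℕ,
      ((∃ i, i < j ∧ ∀ t, u i t ≤ w t + u j t) ↔ ∃ x ∈ q j, 1 ≤ w x))
    (hg : ∀ v : Fin n → ℕ, (∃ i, ∀ t, u i t ≤ v t) →
      ((∀ t, u (g v) t ≤ v t) ∧ ∀ i, (∀ t, u i t ≤ v t) → g v ≤ i))
    (hreg : ∀ j : Fin m, ∀ y ∈ q j,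
      q (g (fun t => u j t + if t = y then 1 else 0)) ⊆ q j)
    {j : Fin m} {σ : Finset (Fin n)} {z y : Fin n}
    (hy : y ∈ q (g (fun t => u j t + if t ∈ insert z σ then 1 else 0))) :
    y ∈ q (g (fun t => u j t + if t ∈ σ then 1 else 0)) := by
  by_cases hzσ : z ∈ σ
  · rwa [Finset.insert_eq_self.mpr hzσ] at hy
  by_cases hzq : z ∈ q (g (fun t => u j t + if t ∈ σ then 1 else 0))
  · obtain ⟨hd, hmin⟩ := hg (fun t => u j t + if t ∈ σ then 1 else 0)
      ⟨j, fun t => Nat.le_add_right _ _⟩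
    have hfun : (fun t => u j t + if t ∈ insert z σ then 1 else 0)
        = (fun t => (u j t + if t ∈ σ then 1 else 0) + if t = z then 1 else 0) := by
      funext t
      by_cases htz : t = z
      · subst htz; simp [hzσ]
      · simp [Finset.mem_insert, htz]
    rw [hfun] at hy
    have hstar := star hq hg hreg hd hmin hzq
    rw [hstar] at hy
    exact hreg _ z hzq hy
  · rwa [charB hq hg hzσ hzq] at hy

lemma lemD
    (hq : ∀ j : Fin m, ∀ w : Fin n → ℕ,
      ((∃ i, i < j ∧ ∀ t, u i t ≤ w t + u j t) ↔ ∃ x ∈ q j, 1 ≤ w x))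
    (hg : ∀ v : Fin n → ℕ, (∃ i, ∀ t, u i t ≤ v t) →
      ((∀ t, u (g v) t ≤ v t) ∧ ∀ i, (∀ t, u i t ≤ v t) → g v ≤ i))
    (hreg : ∀ j : Fin m, ∀ y ∈ q j,
      q (g (fun t => u j t + if t = y then 1 else 0)) ⊆ q j)
    {j : Fin m} (σ s : Finset (Fin n)) {y : Fin n}
    (hy : y ∈ q (g (fun t => u j t + if t ∈ σ ∪ s then 1 else 0))) :
    y ∈ q (g (fun t => u j t + if t ∈ σ then 1 else 0)) := by
  induction s using Finset.induction_on with
  | empty => rwa [Finset.union_empty] at hy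
  | @insert a s ha ih =>
    apply ih
    apply lemF hq hg hreg (z := a)
    rwa [Finset.union_insert] at hy

end CGaux

/-- Setup as in stmt 2.  The closure operator `c` on `𝔮(u_j)` satisfies the
anti-exchange axiom, hence `(𝔮(u_j), c)` is a convex geometry. -/
theorem convex_geometry (n m : ℕ) (u : Fin m → Fin n → ℕ)
    (q : Fin m → Finset (Fin n)) (g : (Fin n → ℕ) → Fin m)
    (hq : ∀ j : Fin m, ∀ w : Fin n → ℕ,
      ((∃ i, i < j ∧ ∀ t, u i t ≤ w t + u j t) ↔ ∃ x ∈ q j, 1 ≤ w x))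
    (hg : ∀ v : Fin n → ℕ, (∃ i, ∀ t, u i t ≤ v t) →
      ((∀ t, u (g v) t ≤ v t) ∧ ∀ i, (∀ t, u i t ≤ v t) → g v ≤ i))
    (hreg : ∀ j : Fin m, ∀ y ∈ q j,
      q (g (fun t => u j t + if t = y then 1 else 0)) ⊆ q j)
    (j : Fin m) (c : Finset (Fin n) → Finset (Fin n))
    (hc : ∀ σ, σ ⊆ q j → (c σ ⊆ q j ∧
      g (fun t => u j t + if t ∈ c σ then 1 else 0)
        = g (fun t => u j t + if t ∈ σ then 1 else 0) ∧
      ∀ τ, τ ⊆ q j →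
        g (fun t => u j t + if t ∈ τ then 1 else 0)
          = g (fun t => u j t + if t ∈ σ then 1 else 0) → τ ⊆ c σ)) :
    (∀ σ, σ ⊆ q j → σ ⊆ c σ) ∧
    (∀ σ τ, σ ⊆ τ → τ ⊆ q j → c σ ⊆ c τ) ∧
    (∀ σ, σ ⊆ q j → c (c σ) = c σ) ∧
    (∀ σ, σ ⊆ q j → ∀ a ∈ q j, ∀ b ∈ q j, a ≠ b →
      a ∉ c σ → b ∉ c σ → a ∈ c (insert b σ) → b ∉ c (insert a σ)) := by
  have hexσ : ∀ σ : Finset (Fin n), ∃ i, ∀ t, u i t ≤ u j t + if t ∈ σ then 1 else 0 :=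
    fun σ => ⟨j, fun t => Nat.le_add_right _ _⟩
  have anti : ∀ σ τ : Finset (Fin n), σ ⊆ τ →
      g (fun t => u j t + if t ∈ τ then 1 else 0)
        ≤ g (fun t => u j t + if t ∈ σ then 1 else 0) := by
    intro σ τ hστ
    refine CGaux.g_le hg (hexσ σ) ?_
    intro t
    by_cases ht : t ∈ σ
    · simp [ht, hστ ht]
    · simp only [if_neg ht]; omega
  have co1 : ∀ σ, σ ⊆ q j → σ ⊆ c σ := fun σ hσ => (hc σ hσ).2.2 σ hσ rfl
  have sandwich : ∀ σ, σ ⊆ q j → ∀ y ∈ c σ,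
      g (fun t => u j t + if t ∈ insert y σ then 1 else 0)
        = g (fun t => u j t + if t ∈ σ then 1 else 0) := by
    intro σ hσ y hy
    have h1 : insert y σ ⊆ c σ := Finset.insert_subset hy (co1 σ hσ)
    have h2 := anti _ _ h1
    have h3 := anti _ _ (Finset.subset_insert y σ)
    have h4 := (hc σ hσ).2.1
    exact le_antisymm h3 (h4 ▸ h2)
  refine ⟨co1, ?_, ?_, ?_⟩
  · -- monotonicity
    intro σ τ hστ hτ x hx
    have hσ : σ ⊆ q j := hστ.trans hτ
    have hxq : x ∈ q j := (hc σ hσ).1 hx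
    by_cases hxτ : x ∈ τ
    · exact co1 τ hτ hxτ
    have hxσ : x ∉ σ := fun h => hxτ (hστ h)
    have hxgσ : x ∉ q (g (fun t => u j t + if t ∈ σ then 1 else 0)) := by
      intro hmem
      have hlt := CGaux.charA hq hg hxσ hmem
      rw [sandwich σ hσ x hx] at hlt
      exact lt_irrefl _ hlt
    have hxgτ : x ∉ q (g (fun t => u j t + if t ∈ τ then 1 else 0)) := by
      intro hmem
      apply hxgσ
      refine CGaux.lemD hq hg hreg σ (τ \ σ) ?_
      rw [Finset.union_sdiff_of_subset hστ]
      exact hmem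
    have hB := CGaux.charB hq hg hxτ hxgτ
    exact ((hc τ hτ).2.2 _ (Finset.insert_subset hxq hτ) hB) (Finset.mem_insert_self x τ)
  · -- idempotence
    intro σ hσ
    obtain ⟨h1, h2, h3⟩ := hc σ hσ
    obtain ⟨h1', h2', h3'⟩ := hc (c σ) h1
    exact Finset.Subset.antisymm (h3 _ h1' (h2'.trans h2)) (h3' _ h1 rfl)
  · -- anti-exchange
    intro σ hσ a haq b hbq hab haσ hbσ hacb hbca
    have haσ' : a ∉ σ := fun h => haσ (co1 σ hσ h)
    have hbσ' : b ∉ σ := fun h => hbσ (co1 σ hσ h)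
    have hsb : insert b σ ⊆ q j := Finset.insert_subset hbq hσ
    have hsa : insert a σ ⊆ q j := Finset.insert_subset haq hσ
    have e1 := sandwich (insert b σ) hsb a hacb
    have e2 := sandwich (insert a σ) hsa b hbca
    rw [Finset.insert_comm b a σ] at e2
    have hstar2 : g (fun t => u j t + if t ∈ insert b σ then 1 else 0)
        = g (fun t => u j t + if t ∈ insert a σ then 1 else 0) := e1.symm.trans e2
    obtain ⟨hda, _⟩ := hg (fun t => u j t + if t ∈ insert a σ then 1 else 0) (hexσ _)
    obtain ⟨hdb, _⟩ := hg (fun t => u j t + if t ∈ insert b σ then 1 else 0) (hexσ _)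
    obtain ⟨hd0, hmin0⟩ := hg (fun t => u j t + if t ∈ σ then 1 else 0) (hexσ _)
    have hkey : ∀ t, u (g (fun t => u j t + if t ∈ insert a σ then 1 else 0)) t
        ≤ u j t + if t ∈ σ then 1 else 0 := by
      intro t
      by_cases hta : t = a
      · subst hta
        have h2 := hdb t
        rw [hstar2] at h2
        have hnb : t ∉ insert b σ := by simp [Finset.mem_insert, hab, haσ']
        rw [if_neg hnb] at h2
        rw [if_neg haσ']
        omega
      · have h1 := hda t
        have hit : (if t ∈ insert a σ then (1:ℕ) else 0) = (if t ∈ σ then 1 else 0) := by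
          simp [Finset.mem_insert, hta]
        omega
    have heq : g (fun t => u j t + if t ∈ insert a σ then 1 else 0)
        = g (fun t => u j t + if t ∈ σ then 1 else 0) :=
      le_antisymm (anti _ _ (Finset.subset_insert a σ)) (hmin0 _ hkey)
    exact haσ (((hc σ hσ).2.2 _ hsa heq) (Finset.mem_insert_self a σ))
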